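/- Let q be a prime power, ℓ ≥ 1, and let F = F_{q^ℓ} with subfield F_q. Let A ⊆ F with |A| = n, let α* ∈ A, and let r ≥ 1. Suppose g_1, …, g_ℓ ∈ F[X] are polynomials, each of degree at most r − 1, such that g_1(α*), …, g_ℓ(α*) span F as an F_q-vector space. For each α ∈ A set b_α := dim_{F_q} span_{F_q}{g_1(α), …, g_ℓ(α)}. Then ∑_{α ∈ A \ {α*}} q^{−b_α} ≤ ((r − 1)(q^ℓ − 1) + (n − 1)) / q^ℓ. -/

import Mathlib

open scoped Classical

/-- If `g₁, …, g_ℓ` are polynomials over `F = F_{q^ℓ}` of degree at most `r − 1` whose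
evaluations at `α* ∈ A` span `F` over the subfield `K = F_q`, then with
`b_α := dim_K span_K {g_i(α)}`, one has
`∑_{α ∈ A \ {α*}} q^{−b_α} ≤ ((r − 1)(q^ℓ − 1) + (n − 1)) / q^ℓ`. -/
theorem statement0 {K F : Type*} [Field K] [Field F] [Fintype K] [Fintype F] [Algebra K F]
    (q ℓ n r : ℕ) (hq : Fintype.card K = q) (hℓ : Module.finrank K F = ℓ) (hℓ1 : 1 ≤ ℓ)
    (hr : 1 ≤ r)
    (A : Finset F) (hA : A.card = n) (αs : F) (hαs : αs ∈ A)
    (g : Fin ℓ → Polynomial F) (hdeg : ∀ i, (g i).natDegree ≤ r - 1)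
    (hspan : Submodule.span K (Set.range fun i => (g i).eval αs) = ⊤)
    (b : F → ℕ)
    (hb : ∀ α : F, b α = Module.finrank K
      (Submodule.span K (Set.range fun i => (g i).eval α))) :
    ∑ α ∈ A.erase αs, ((q : ℝ)) ^ (-(b α : ℤ)) ≤
      (((r : ℝ) - 1) * ((q : ℝ) ^ ℓ - 1) + ((n : ℝ) - 1)) / (q : ℝ) ^ ℓ := by
    classical
  haveI : Module.Finite K F := Module.Finite.of_finite
  have hq2 : 2 ≤ q := by rw [← hq]; exact Fintype.one_lt_card
  have hq0 : (0 : ℝ) < (q : ℝ) := by positivity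
  have hql : (0 : ℝ) < (q : ℝ) ^ ℓ := by positivity
  have hn1 : 1 ≤ n := by rw [← hA]; exact Finset.card_pos.2 ⟨αs, hαs⟩
  have hble : ∀ α : F, b α ≤ ℓ := by
    intro α; rw [hb]; exact le_trans (Submodule.finrank_le _) (le_of_eq hℓ)
  -- counting the kernel
  have key : ∀ α : F, (Finset.univ.filter
      (fun c : Fin ℓ → K => ∑ i, c i • (g i).eval α = 0)).card = q ^ (ℓ - b α) := by
    intro α
    set f := Fintype.linearCombination K (fun i => (g i).eval α) with hf
    have hrange : Module.finrank K (LinearMap.range f) = b α := by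
      rw [hb α, hf, Fintype.range_linearCombination]
    have hrn := LinearMap.finrank_range_add_finrank_ker f
    rw [Module.finrank_fin_fun, hrange] at hrn
    have hker : Module.finrank K (LinearMap.ker f) = ℓ - b α := by omega
    have hcard : Fintype.card (LinearMap.ker f) = q ^ (ℓ - b α) := by
      rw [Module.card_eq_pow_finrank (K := K), hker, hq]
    rw [← hcard, ← Fintype.card_subtype]
    apply Fintype.card_congr
    exact (Equiv.subtypeEquivRight (fun c => by
      simp [hf, Fintype.linearCombination_apply, LinearMap.mem_ker])).symm
  -- linear independence at αs
  have hli : LinearIndependent K (fun i => (g i).eval αs) :=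
    linearIndependent_of_top_le_span_of_card_eq_finrank (le_of_eq hspan.symm)
      (by rw [Fintype.card_fin, hℓ])
  -- root bound for nonzero c
  have hbound : ∀ c : Fin ℓ → K, c ≠ 0 →
      ((A.erase αs).filter (fun α => ∑ i, c i • (g i).eval α = 0)).card ≤ r - 1 := by
    intro c hc
    set h : Polynomial F := ∑ i, Polynomial.C (algebraMap K F (c i)) * g i with hh
    have heval : ∀ α : F, h.eval α = ∑ i, c i • (g i).eval α := by
      intro α
      simp [hh, Polynomial.eval_finset_sum, Algebra.smul_def]
    have hne : h ≠ 0 := by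
      intro h0
      have hz : ∑ i, c i • (g i).eval αs = 0 := by rw [← heval, h0]; simp
      have := Fintype.linearIndependent_iff.1 hli c hz
      exact hc (funext this)
    have hdeg' : h.natDegree ≤ r - 1 :=
      Polynomial.natDegree_sum_le_of_forall_le _ _ (fun i _ =>
        le_trans (Polynomial.natDegree_C_mul_le _ _) (hdeg i))
    calc ((A.erase αs).filter (fun α => ∑ i, c i • (g i).eval α = 0)).card
        ≤ h.roots.toFinset.card := by
          apply Finset.card_le_card
          intro α hα
          simp only [Finset.mem_filter] at hα
          rw [Multiset.mem_toFinset, Polynomial.mem_roots hne]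
          rw [Polynomial.IsRoot, heval]
          exact hα.2
      _ ≤ Multiset.card h.roots := Multiset.toFinset_card_le _
      _ ≤ h.natDegree := Polynomial.card_roots' h
      _ ≤ r - 1 := hdeg'
  -- double counting
  have count : ∑ α ∈ A.erase αs, q ^ (ℓ - b α)
      = ∑ c : Fin ℓ → K,
        ((A.erase αs).filter (fun α => ∑ i, c i • (g i).eval α = 0)).card := by
    simp_rw [← key, Finset.card_filter]
    rw [Finset.sum_comm]
  have hc0 : ((A.erase αs).filter
      (fun α => ∑ i, (0 : Fin ℓ → K) i • (g i).eval α = 0)).card = n - 1 := by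
    rw [Finset.filter_true_of_mem (fun α _ => by simp), Finset.card_erase_of_mem hαs, hA]
  have hcardfun : Fintype.card (Fin ℓ → K) = q ^ ℓ := by
    simp [Fintype.card_fun, hq]
  have htotal : ∑ α ∈ A.erase αs, q ^ (ℓ - b α) ≤ (q ^ ℓ - 1) * (r - 1) + (n - 1) := by
    rw [count, ← Finset.sum_erase_add _ _ (Finset.mem_univ (0 : Fin ℓ → K)), hc0]
    have h1 : ∑ c ∈ Finset.univ.erase (0 : Fin ℓ → K),
        ((A.erase αs).filter (fun α => ∑ i, c i • (g i).eval α = 0)).card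
        ≤ (Finset.univ.erase (0 : Fin ℓ → K)).card * (r - 1) := by
      rw [← smul_eq_mul]
      exact Finset.sum_le_card_nsmul _ _ _ (fun c hcmem =>
        hbound c (Finset.ne_of_mem_erase hcmem))
    have h2 : (Finset.univ.erase (0 : Fin ℓ → K)).card = q ^ ℓ - 1 := by
      rw [Finset.card_erase_of_mem (Finset.mem_univ _), Finset.card_univ, hcardfun]
    exact Nat.add_le_add_right (h2 ▸ h1) _
  -- real conversion
  have step : ∀ α ∈ A.erase αs,
      ((q : ℝ)) ^ (-(b α : ℤ)) = ((q ^ (ℓ - b α) : ℕ) : ℝ) / (q : ℝ) ^ ℓ := by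
    intro α _
    have hcast : ((q ^ (ℓ - b α) : ℕ) : ℝ) = (q : ℝ) ^ ((ℓ : ℤ) - (b α : ℤ)) := by
      rw [Nat.cast_pow, ← zpow_natCast (q : ℝ) (ℓ - b α)]
      congr 1
      exact Nat.cast_sub (hble α)
    rw [hcast, ← zpow_natCast (q : ℝ) ℓ, ← zpow_sub₀ (ne_of_gt hq0)]
    congr 1
    ring
  rw [Finset.sum_congr rfl step, ← Finset.sum_div]
  gcongr
  calc (∑ α ∈ A.erase αs, ((q ^ (ℓ - b α) : ℕ) : ℝ))
      = (((∑ α ∈ A.erase αs, q ^ (ℓ - b α)) : ℕ) : ℝ) := by push_cast; ring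
    _ ≤ (((q ^ ℓ - 1) * (r - 1) + (n - 1) : ℕ) : ℝ) := by exact_mod_cast htotal
    _ = ((r : ℝ) - 1) * ((q : ℝ) ^ ℓ - 1) + ((n : ℝ) - 1) := by
        have hq1 : 1 ≤ q ^ ℓ := Nat.one_le_pow _ _ (by clear * - hq2; omega)
        push_cast [Nat.cast_sub hq1, Nat.cast_sub hr, Nat.cast_sub hn1]
        ring
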